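/- Qubitization/quantum singular value transformation for even Chebyshev polynomials with a general block encoding: Let M, N be positive integers and let U ∈ ℂ^{(M·N)×(M·N)}, indexed by pairs (a,i) ∈ [M]×[N], be unitary. Define A ∈ ℂ^{N×N} by A_{ij} = U_{(0,i),(0,j)} (the upper-left block), and let Z_Π be the diagonal matrix with (Z_Π)_{(a,i),(a,i)} = 1 if a = 0 and −1 if a ≠ 0. Then for every k ∈ ℕ and all i, j ∈ [N], ((U†·Z_Π·U·Z_Π)^k)_{(0,i),(0,j)} = (T_k(2·A†A − I))_{ij}, where T_k is the k-th Chebyshev polynomial of the first kind evaluated at the matrix 2A†A − I. Equivalently, since T_{2k}(σ) = T_k(2σ² − 1), the upper-left block of (U†Z_Π U Z_Π)^k is the singular value transformation T_{2k}^▷(A) = V·T_{2k}(Σ)·V† where A = WΣV† is a singular value decomposition. -/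

import Mathlib

open Polynomial Matrix in
private lemma qsvt_aux {m n : Type*} [Fintype m] [Fintype n] [DecidableEq n] [DecidableEq m]
    (e : Matrix m n ℂ) (W Z : Matrix m m ℂ)
    (hE : eᴴ * e = 1) (hZe : Z * e = e) (hEZ : eᴴ * Z = eᴴ) (hZZ : Z * Z = 1)
    (hWV : W * (Z * W * Z) = 1) (hVW : (Z * W * Z) * W = 1)
    (hZ2 : (1 : Matrix m m ℂ) + Z = (2 : ℂ) • (e * eᴴ)) :
    ∀ k : ℕ, eᴴ * W ^ k * e =
      Polynomial.aeval (eᴴ * W * e) (Polynomial.Chebyshev.T ℂ (k : ℤ)) := by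
  set V := Z * W * Z with hV
  set X := eᴴ * W * e with hX
  have hVk : ∀ k : ℕ, V ^ k = Z * W ^ k * Z := by
    intro k
    induction k with
    | zero => simp [hZZ]
    | succ k ih =>
        rw [pow_succ, ih, hV, pow_succ]
        calc Z * W ^ k * Z * (Z * W * Z) = Z * W ^ k * (Z * Z) * W * Z := by
              simp only [Matrix.mul_assoc]
          _ = Z * (W ^ k * W) * Z := by rw [hZZ]; simp only [mul_one, mul_assoc]
  have hDsum : ∀ k : ℕ, eᴴ * V ^ k * e = eᴴ * W ^ k * e := by
    intro k
    rw [hVk]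
    calc eᴴ * (Z * W ^ k * Z) * e = (eᴴ * Z) * W ^ k * (Z * e) := by
          simp only [Matrix.mul_assoc]
      _ = eᴴ * W ^ k * e := by rw [hEZ, hZe]
  have hcross : eᴴ * (W + V) = (2 : ℂ) • (X * eᴴ) := by
    have h1 : eᴴ * V = eᴴ * W * Z := by
      rw [hV]
      calc eᴴ * (Z * W * Z) = (eᴴ * Z) * W * Z := by simp only [Matrix.mul_assoc]
        _ = eᴴ * W * Z := by rw [hEZ]
    rw [Matrix.mul_add, h1]
    calc eᴴ * W + eᴴ * W * Z = eᴴ * W * ((1 : Matrix m m ℂ) + Z) := by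
          rw [Matrix.mul_add, Matrix.mul_one]
      _ = eᴴ * W * ((2 : ℂ) • (e * eᴴ)) := by rw [hZ2]
      _ = (2 : ℂ) • (X * eᴴ) := by
          rw [Matrix.mul_smul, hX]; simp only [Matrix.mul_assoc]
  have hS : ∀ k : ℕ, W ^ (k + 2) + V ^ (k + 2)
      = (W + V) * (W ^ (k + 1) + V ^ (k + 1)) - (W ^ k + V ^ k) := by
    intro k
    have h1 : W * V ^ (k + 1) = V ^ k := by
      rw [pow_succ', ← mul_assoc, hWV, one_mul]
    have h2 : V * W ^ (k + 1) = W ^ k := by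
      rw [pow_succ', ← mul_assoc, hVW, one_mul]
    rw [add_mul, mul_add, mul_add, h1, h2, ← pow_succ', ← pow_succ']
    abel
  have e1 : ∀ j : ℕ, eᴴ * (W ^ j + V ^ j) * e = eᴴ * W ^ j * e + eᴴ * W ^ j * e := by
    intro j
    rw [Matrix.mul_add, Matrix.add_mul, hDsum]
  have htwo : ∀ Y : Matrix n n ℂ, (2 : ℂ) • Y = 2 * Y := by
    intro Y; rw [two_smul, two_mul]
  intro k
  induction k using Nat.twoStepInduction with
  | zero => simpa using hE
  | one => simp [hX]
  | more k ih1 ih2 =>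
      have key : eᴴ * W ^ (k + 2) * e + eᴴ * W ^ (k + 2) * e
          = ((2 : ℂ) • (X * (eᴴ * W ^ (k + 1) * e)) + (2 : ℂ) • (X * (eᴴ * W ^ (k + 1) * e)))
            - (eᴴ * W ^ k * e + eᴴ * W ^ k * e) := by
        calc eᴴ * W ^ (k + 2) * e + eᴴ * W ^ (k + 2) * e
            = eᴴ * (W ^ (k + 2) + V ^ (k + 2)) * e := (e1 _).symm
          _ = eᴴ * ((W + V) * (W ^ (k + 1) + V ^ (k + 1)) - (W ^ k + V ^ k)) * e := by
              rw [hS]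
          _ = (eᴴ * (W + V)) * ((W ^ (k + 1) + V ^ (k + 1)) * e) - eᴴ * (W ^ k + V ^ k) * e := by
              rw [Matrix.mul_sub, Matrix.sub_mul]
              simp only [Matrix.mul_assoc]
          _ = (2 : ℂ) • (X * (eᴴ * ((W ^ (k + 1) + V ^ (k + 1)) * e))) - eᴴ * (W ^ k + V ^ k) * e := by
              rw [hcross, Matrix.smul_mul]
              simp only [Matrix.mul_assoc]
          _ = ((2 : ℂ) • (X * (eᴴ * W ^ (k + 1) * e)) + (2 : ℂ) • (X * (eᴴ * W ^ (k + 1) * e)))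
              - (eᴴ * W ^ k * e + eᴴ * W ^ k * e) := by
              have e1' : eᴴ * ((W ^ (k + 1) + V ^ (k + 1)) * e)
                  = eᴴ * W ^ (k + 1) * e + eᴴ * W ^ (k + 1) * e := by
                rw [← Matrix.mul_assoc]; exact e1 _
              rw [e1', e1, Matrix.mul_add, smul_add]
      have hD : eᴴ * W ^ (k + 2) * e
          = (2 : ℂ) • (X * (eᴴ * W ^ (k + 1) * e)) - eᴴ * W ^ k * e := by
        have h2 : eᴴ * W ^ (k + 2) * e + eᴴ * W ^ (k + 2) * e
            = ((2 : ℂ) • (X * (eᴴ * W ^ (k + 1) * e)) - eᴴ * W ^ k * e)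
              + ((2 : ℂ) • (X * (eᴴ * W ^ (k + 1) * e)) - eᴴ * W ^ k * e) := by
          rw [key]; abel
        have h2' : (2 : ℂ) • (eᴴ * W ^ (k + 2) * e)
            = (2 : ℂ) • ((2 : ℂ) • (X * (eᴴ * W ^ (k + 1) * e)) - eᴴ * W ^ k * e) := by
          rw [two_smul, two_smul]; exact h2
        exact smul_right_injective _ (two_ne_zero) h2'
      have hcast : ((k + 2 : ℕ) : ℤ) = (k : ℤ) + 2 := by push_cast; ring
      have hcast1 : ((k + 1 : ℕ) : ℤ) = (k : ℤ) + 1 := by push_cast; ring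
      rw [hcast1] at ih2
      rw [hD, ih1, ih2, hcast, Polynomial.Chebyshev.T_add_two, map_sub, _root_.map_mul,
        _root_.map_mul, Polynomial.aeval_X, htwo, ← mul_assoc, map_ofNat]

set_option maxHeartbeats 1000000 in
/-- **Qubitization / quantum singular value transformation for even Chebyshev
polynomials with a general block encoding.**
Let `U ∈ ℂ^{(M·N)×(M·N)}` (indexed by pairs `(a,i) ∈ [M]×[N]`) be unitary,
let `A` be its upper-left block `A_{ij} = U_{(0,i),(0,j)}`, and let `Z_Π` be
the diagonal matrix with entry `1` at ancilla index `0` and `−1` otherwise.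
Then for every `k ∈ ℕ` the upper-left block of `(U†·Z_Π·U·Z_Π)^k` is
`T_k(2·A†A − I)`:
`((U†·Z_Π·U·Z_Π)^k)_{(0,i),(0,j)} = (T_k(2A†A − I))_{ij}`. -/
theorem qsvt_even_chebyshev_block_encoding (M N : ℕ) (hM : 0 < M) (hN : 0 < N)
    (U : Matrix (Fin M × Fin N) (Fin M × Fin N) ℂ)
    (hU : U ∈ Matrix.unitaryGroup (Fin M × Fin N) ℂ)
    (A : Matrix (Fin N) (Fin N) ℂ)
    (hA : ∀ i j : Fin N, A i j = U (⟨0, hM⟩, i) (⟨0, hM⟩, j))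
    (Z : Matrix (Fin M × Fin N) (Fin M × Fin N) ℂ)
    (hZ : Z = Matrix.diagonal fun p => if p.1 = ⟨0, hM⟩ then 1 else -1) :
    ∀ (k : ℕ) (i j : Fin N),
      ((U.conjTranspose * Z * U * Z) ^ k) (⟨0, hM⟩, i) (⟨0, hM⟩, j) =
        (Polynomial.aeval ((2 : ℂ) • (A.conjTranspose * A) - 1)
          (Polynomial.Chebyshev.T ℂ (k : ℤ))) i j := by
  open Matrix in
  set z : Fin M := ⟨0, hM⟩ with hz
  set e : Matrix (Fin M × Fin N) (Fin N) ℂ :=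
    Matrix.of (fun p j => if p = (z, j) then (1 : ℂ) else 0) with he
  have hentry : ∀ (B : Matrix (Fin M × Fin N) (Fin M × Fin N) ℂ) (i j : Fin N),
      (eᴴ * B * e) i j = B (z, i) (z, j) := by
    intro B i j
    simp [Matrix.mul_apply, he, Matrix.conjTranspose_apply, apply_ite (starRingEnd ℂ),
      ite_mul, mul_ite, one_mul, zero_mul, mul_one, mul_zero, Finset.sum_ite_eq,
      Finset.sum_ite_eq']
  have hE : eᴴ * e = 1 := by
    ext i j
    simp [Matrix.mul_apply, he, Matrix.conjTranspose_apply, apply_ite (starRingEnd ℂ),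
      ite_mul, one_mul, zero_mul, Prod.ext_iff, ite_and, Matrix.one_apply,
      Fintype.sum_prod_type, Finset.sum_ite_eq, Finset.sum_ite_eq']
    split_ifs <;> simp_all
  have hZe : Z * e = e := by
    ext p j
    rw [hZ]
    simp only [Matrix.diagonal_mul, he, Matrix.of_apply]
    by_cases h : p = (z, j)
    · simp [h]
    · simp [h]
  have hZZ : Z * Z = 1 := by
    rw [hZ]
    ext p q
    simp [Matrix.diagonal_mul_diagonal, Matrix.diagonal_apply, Matrix.one_apply]
    split_ifs <;> simp_all
  have hEZ : eᴴ * Z = eᴴ := by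
    have hZH : Zᴴ = Z := by
      rw [hZ]
      ext p q
      simp [Matrix.conjTranspose_apply, Matrix.diagonal_apply, apply_ite (starRingEnd ℂ)]
      split_ifs <;> simp_all [eq_comm]
    calc eᴴ * Z = eᴴ * Zᴴ := by rw [hZH]
      _ = (Z * e)ᴴ := by rw [Matrix.conjTranspose_mul]
      _ = eᴴ := by rw [hZe]
  have hee : e * eᴴ = Matrix.diagonal (fun p => if p.1 = z then (1:ℂ) else 0) := by
    ext p q
    simp [Matrix.mul_apply, he, Matrix.conjTranspose_apply, apply_ite (starRingEnd ℂ),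
      ite_mul, mul_ite, Prod.ext_iff, ite_and, Finset.sum_ite_eq, Finset.sum_ite_eq',
      Matrix.diagonal_apply]
    split_ifs <;> simp_all
  have hZ2 : (1 : Matrix (Fin M × Fin N) (Fin M × Fin N) ℂ) + Z = (2 : ℂ) • (e * eᴴ) := by
    rw [hZ, hee]
    ext p q
    simp [Matrix.one_apply, Matrix.diagonal_apply]
    split_ifs <;> simp_all <;> ring
  have hUtU : Uᴴ * U = 1 := by
    have := Matrix.mem_unitaryGroup_iff'.mp hU
    simpa [Matrix.star_eq_conjTranspose] using this
  have hUUt : U * Uᴴ = 1 := by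
    have := Matrix.mem_unitaryGroup_iff.mp hU
    simpa [Matrix.star_eq_conjTranspose] using this
  set W := Uᴴ * Z * U * Z with hW
  -- helper rewrites for associativity-heavy cancellations
  have cZZ : ∀ B : Matrix (Fin M × Fin N) (Fin M × Fin N) ℂ, Z * (Z * B) = B := by
    intro B; rw [← Matrix.mul_assoc, hZZ, Matrix.one_mul]
  have cU : ∀ B : Matrix (Fin M × Fin N) (Fin M × Fin N) ℂ, U * (Uᴴ * B) = B := by
    intro B; rw [← Matrix.mul_assoc, hUUt, Matrix.one_mul]
  have cUt : ∀ B : Matrix (Fin M × Fin N) (Fin M × Fin N) ℂ, Uᴴ * (U * B) = B := by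
    intro B; rw [← Matrix.mul_assoc, hUtU, Matrix.one_mul]
  have hWV : W * (Z * W * Z) = 1 := by
    rw [hW]
    simp only [Matrix.mul_assoc]
    simp only [cZZ, cU, cUt, hZZ, hUtU, hUUt, Matrix.mul_one]
  have hVW : (Z * W * Z) * W = 1 := by
    rw [hW]
    simp only [Matrix.mul_assoc]
    simp only [cZZ, cU, cUt, hZZ, hUtU, hUUt, Matrix.mul_one]
  -- the block of W is 2 A†A − 1
  have hAe : A = eᴴ * U * e := by
    ext i j
    rw [hentry, hA]
  have hX : eᴴ * W * e = (2 : ℂ) • (Aᴴ * A) - 1 := by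
    have h1 : W * e = Uᴴ * (Z * (U * e)) := by
      rw [hW]
      simp only [Matrix.mul_assoc]
      rw [hZe]
    have h2 : Z * (U * e) = (2 : ℂ) • (e * (eᴴ * (U * e))) - U * e := by
      have : Z = (2 : ℂ) • (e * eᴴ) - 1 := by
        rw [← hZ2]; abel
      rw [this, Matrix.sub_mul, Matrix.smul_mul, Matrix.one_mul, Matrix.mul_assoc]
    rw [Matrix.mul_assoc, h1, h2]
    rw [Matrix.mul_sub, Matrix.mul_smul, Matrix.mul_sub, Matrix.mul_smul]
    have h3 : eᴴ * (Uᴴ * (e * (eᴴ * (U * e)))) = Aᴴ * A := by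
      have hAt : Aᴴ = eᴴ * Uᴴ * e := by
        rw [hAe, Matrix.conjTranspose_mul, Matrix.conjTranspose_mul,
          Matrix.conjTranspose_conjTranspose]
        simp only [Matrix.mul_assoc]
      rw [hAt, hAe]
      simp only [Matrix.mul_assoc]
    have h4 : eᴴ * (Uᴴ * (U * e)) = 1 := by
      rw [← Matrix.mul_assoc Uᴴ U e, hUtU, Matrix.one_mul, hE]
    rw [h3, h4]
  -- conclude
  intro k i j
  have := qsvt_aux e W Z hE hZe hEZ hZZ hWV hVW hZ2 k
  rw [hX] at this
  calc (W ^ k) (z, i) (z, j) = (eᴴ * W ^ k * e) i j := (hentry _ i j).symm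
    _ = (Polynomial.aeval ((2 : ℂ) • (Aᴴ * A) - 1) (Polynomial.Chebyshev.T ℂ (k : ℤ))) i j := by
        rw [this]
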